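/- Let p > 1 be real, let N be real with −1 < N ≤ 0, and let D ≥ 1 be real. Define γ₀ = 1 and γₙ = ∏_{i=0}^{n−1} (pⁱ + N)/(pⁱ + D) for n ≥ 1 (each factor is positive and at most 1). Then there exists a probability measure μ supported in [0,1] such that γₙ = ∫ tⁿ dμ(t) for all n ∈ ℕ. (That is, the geometrically regular weighted shift with weights αₙ = √((pⁿ + N)/(pⁿ + D)) is subnormal for parameters lying 'above Sector III' of the magic square, i.e., D ≥ 1 and −1 < N ≤ 0.) -/

import Mathlib

open MeasureTheory

section GRWSauxSec
open Filter Topology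

namespace GRWSaux

noncomputable def g (N D q : ℝ) : ℕ → ℝ
  | 0 => 1
  | k + 1 => g N D q k * ((D * q ^ k - N) / (1 - q ^ (k + 1)))

variable {N D q : ℝ}

lemma g_pos (hq0 : 0 < q) (hq1 : q < 1) (hN : N ≤ 0) (hD : 0 < D) :
    ∀ k, 0 < g N D q k
  | 0 => one_pos
  | k + 1 => by
    have h1 : 0 < D * q ^ k - N := by nlinarith [pow_pos hq0 k]
    have h2 : 0 < 1 - q ^ (k + 1) := by
      have := pow_lt_one₀ hq0.le hq1 (by omega : k + 1 ≠ 0)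
      linarith
    exact mul_pos (g_pos hq0 hq1 hN hD k) (div_pos h1 h2)

lemma g_rec (hq0 : 0 < q) (hq1 : q < 1) (k : ℕ) :
    g N D q (k + 1) * (1 - q ^ (k + 1)) = g N D q k * (D * q ^ k - N) := by
  have h2 : (1 : ℝ) - q ^ (k + 1) ≠ 0 := by
    have := pow_lt_one₀ hq0.le hq1 (by omega : k + 1 ≠ 0)
    intro h; linarith [h]
  show g N D q k * ((D * q ^ k - N) / (1 - q ^ (k + 1))) * (1 - q ^ (k + 1)) = _
  field_simp

lemma summable_g (hq0 : 0 < q) (hq1 : q < 1) (hN₁ : -1 < N) (hN : N ≤ 0) (hD : 0 < D) :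
    Summable (g N D q) := by
  set r : ℝ := (1 + -N) / 2 with hr
  have hr1 : r < 1 := by rw [hr]; linarith
  have hNr : -N < r := by rw [hr]; linarith
  have hq := tendsto_pow_atTop_nhds_zero_of_lt_one hq0.le hq1
  have hnum : Tendsto (fun k : ℕ => D * q ^ k - N) atTop (𝓝 (-N)) := by
    have := (hq.const_mul D).sub_const N
    simpa using this
  have hden : Tendsto (fun k : ℕ => 1 - q ^ (k + 1)) atTop (𝓝 1) := by
    have h1 : Tendsto (fun k : ℕ => q ^ (k + 1)) atTop (𝓝 0) := by
      have := hq.mul_const q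
      simpa [pow_succ] using this
    simpa using tendsto_const_nhds.sub h1
  have h1 : Tendsto (fun k : ℕ => (D * q ^ k - N) / (1 - q ^ (k + 1))) atTop (𝓝 (-N)) := by
    have := hnum.div hden one_ne_zero
    rw [div_one] at this
    exact this
  apply summable_of_ratio_norm_eventually_le hr1
  filter_upwards [h1.eventually_lt_const hNr] with k hk
  have hgk := g_pos hq0 hq1 hN hD k
  have hgk1 := g_pos hq0 hq1 hN hD (k + 1)
  rw [Real.norm_eq_abs, Real.norm_eq_abs, abs_of_pos hgk1, abs_of_pos hgk]
  show g N D q k * ((D * q ^ k - N) / (1 - q ^ (k + 1))) ≤ r * g N D q k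
  nlinarith

lemma summable_g_mul_pow (hq0 : 0 < q) (hq1 : q < 1) (hN₁ : -1 < N) (hN : N ≤ 0)
    (hD : 0 < D) {z : ℝ} (hz0 : 0 ≤ z) (hz1 : z ≤ 1) :
    Summable (fun k => g N D q k * z ^ k) := by
  refine (summable_g hq0 hq1 hN₁ hN hD).of_nonneg_of_le
    (fun k => mul_nonneg (g_pos hq0 hq1 hN hD k).le (pow_nonneg hz0 k)) (fun k => ?_)
  have hg := (g_pos hq0 hq1 hN hD k).le
  have := pow_le_one₀ (n := k) hz0 hz1
  nlinarith


lemma funceq (hq0 : 0 < q) (hq1 : q < 1) (hN₁ : -1 < N) (hN : N ≤ 0) (hD : 0 < D)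
    (n : ℕ) :
    (1 + N * q ^ n) * ∑' k, g N D q k * (q ^ n) ^ k
      = (1 + D * q ^ n) * ∑' k, g N D q k * (q ^ (n + 1)) ^ k := by
  have hqn0 : (0:ℝ) ≤ q ^ n := (pow_pos hq0 n).le
  have hqn1 : q ^ n ≤ 1 := pow_le_one₀ hq0.le hq1.le
  have hqn10 : (0:ℝ) ≤ q ^ (n+1) := (pow_pos hq0 (n+1)).le
  have hqn11 : q ^ (n+1) ≤ 1 := pow_le_one₀ hq0.le hq1.le
  set B : ℕ → ℝ := fun k => g N D q k * (q ^ n) ^ k * (1 - q ^ k) with hB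
  have hBsum : Summable B := by
    refine (summable_g hq0 hq1 hN₁ hN hD).of_nonneg_of_le (fun k => ?_) (fun k => ?_)
    · have h1 := g_pos hq0 hq1 hN hD k
      have h2 : q ^ k ≤ 1 := pow_le_one₀ hq0.le hq1.le
      have h3 : (0:ℝ) ≤ (q ^ n) ^ k := pow_nonneg hqn0 k
      simp only [hB]
      exact mul_nonneg (mul_nonneg h1.le h3) (by linarith)
    · have h1 := (g_pos hq0 hq1 hN hD k).le
      have h2 : (q ^ n) ^ k ≤ 1 := pow_le_one₀ hqn0 hqn1
      have h2' : (0:ℝ) ≤ (q ^ n) ^ k := pow_nonneg hqn0 k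
      have h3 : q ^ k ≤ 1 := pow_le_one₀ hq0.le hq1.le
      have h4 : (0:ℝ) < q ^ k := pow_pos hq0 k
      simp only [hB]
      have s1 : g N D q k * (q ^ n) ^ k ≤ g N D q k := mul_le_of_le_one_right h1 h2
      have s2 : (0:ℝ) ≤ g N D q k * (q ^ n) ^ k := mul_nonneg h1 h2'
      have s3 : g N D q k * (q ^ n) ^ k * (1 - q ^ k) ≤ g N D q k * (q ^ n) ^ k :=
        mul_le_of_le_one_right s2 (by linarith)
      linarith
  have hBsucc : Summable (fun k => B (k + 1)) := (summable_nat_add_iff 1).2 hBsum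
  have hs1 : Summable (fun k => g N D q k * (q ^ n) ^ k) :=
    summable_g_mul_pow hq0 hq1 hN₁ hN hD hqn0 hqn1
  have hs2 : Summable (fun k => g N D q k * (q ^ (n + 1)) ^ k) :=
    summable_g_mul_pow hq0 hq1 hN₁ hN hD hqn10 hqn11
  have key : ∀ k, (1 + N * q ^ n) * (g N D q k * (q ^ n) ^ k)
      = (1 + D * q ^ n) * (g N D q k * (q ^ (n + 1)) ^ k) + (B k - B (k + 1)) := by
    intro k
    have hrec := g_rec (N := N) (D := D) hq0 hq1 k
    have hBk1 : B (k + 1) = (g N D q k * (D * q ^ k - N)) * ((q ^ n) ^ k * q ^ n) := by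
      simp only [hB]
      rw [pow_succ (q ^ n) k]
      calc g N D q (k+1) * ((q ^ n) ^ k * q ^ n) * (1 - q ^ (k+1))
          = (g N D q (k+1) * (1 - q ^ (k+1))) * ((q ^ n) ^ k * q ^ n) := by ring
        _ = _ := by rw [hrec]
    have hpow : (q ^ (n + 1)) ^ k = (q ^ n) ^ k * q ^ k := by
      rw [pow_succ, mul_pow]
    rw [hBk1, hpow]
    simp only [hB]
    ring
  calc (1 + N * q ^ n) * ∑' k, g N D q k * (q ^ n) ^ k
      = ∑' k, (1 + N * q ^ n) * (g N D q k * (q ^ n) ^ k) := (tsum_mul_left).symm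
    _ = ∑' k, ((1 + D * q ^ n) * (g N D q k * (q ^ (n + 1)) ^ k) + (B k - B (k + 1))) :=
        tsum_congr key
    _ = (∑' k, (1 + D * q ^ n) * (g N D q k * (q ^ (n + 1)) ^ k))
          + ∑' k, (B k - B (k + 1)) := Summable.tsum_add (hs2.mul_left _) (hBsum.sub hBsucc)
    _ = (1 + D * q ^ n) * ∑' k, g N D q k * (q ^ (n + 1)) ^ k := by
        rw [tsum_mul_left]
        have h0 : (∑' k, (B k - B (k + 1))) = 0 := by
          rw [Summable.tsum_sub hBsum hBsucc]
          have := Summable.tsum_eq_zero_add hBsum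
          have hB0 : B 0 = 0 := by simp [hB]
          rw [this, hB0, zero_add]
          ring
        rw [h0, add_zero]

lemma one_add_q_pos (hq0 : 0 < q) (hq1 : q < 1) (hN₁ : -1 < N) (hN : N ≤ 0) (i : ℕ) :
    0 < 1 + N * q ^ i := by
  have h1 : q ^ i ≤ 1 := pow_le_one₀ hq0.le hq1.le
  have h2 : (0:ℝ) < q ^ i := pow_pos hq0 i
  nlinarith

lemma T_eq (hq0 : 0 < q) (hq1 : q < 1) (hN₁ : -1 < N) (hN : N ≤ 0) (hD : 0 < D) :
    ∀ n : ℕ, (∑' k, g N D q k * (q ^ n) ^ k)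
      = (∑' k, g N D q k) * ∏ i ∈ Finset.range n, (1 + N * q ^ i) / (1 + D * q ^ i)
  | 0 => by simp
  | n + 1 => by
    have hDpos : 0 < 1 + D * q ^ n := by positivity
    have hfe := funceq hq0 hq1 hN₁ hN hD n
    have ih := T_eq hq0 hq1 hN₁ hN hD n
    rw [Finset.prod_range_succ, ← mul_assoc, ← ih]
    field_simp
    linear_combination -hfe

end GRWSaux

end GRWSauxSec

open GRWSaux in

/-- Let `p > 1`, `−1 < N ≤ 0`, `D ≥ 1`.  Then the moments
`γₙ = ∏_{i=0}^{n−1} (pⁱ + N)/(pⁱ + D)` come from a probability measure supported in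
`[0,1]`.  That is, the geometrically regular weighted shift with weights
`αₙ = √((pⁿ + N)/(pⁿ + D))` is subnormal for parameters 'above Sector III' of the magic
square. -/
theorem grws_above_sector_III_subnormal (p N D : ℝ) (hp : 1 < p)
    (hN₁ : -1 < N) (hN₂ : N ≤ 0) (hD : 1 ≤ D) :
    ∃ μ : Measure ℝ, IsProbabilityMeasure μ ∧ μ (Set.Icc (0 : ℝ) 1)ᶜ = 0 ∧
      ∀ n : ℕ, ∫ t, t ^ n ∂μ =
        ∏ i ∈ Finset.range n, (p ^ i + N) / (p ^ i + D) := by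
  have hp0 : (0:ℝ) < p := lt_trans one_pos hp
  set q : ℝ := p⁻¹ with hqdef
  have hq0 : 0 < q := inv_pos.2 hp0
  have hq1 : q < 1 := by
    rw [hqdef, inv_lt_one_iff₀]; right; exact hp
  have hD0 : (0:ℝ) < D := lt_of_lt_of_le one_pos hD
  have hgsum : Summable (g N D q) := summable_g hq0 hq1 hN₁ hN₂ hD0
  set S : ℝ := ∑' k, g N D q k with hSdef
  have hS1 : (1:ℝ) ≤ S := by
    have := Summable.le_tsum hgsum 0 (fun i _ => (g_pos hq0 hq1 hN₂ hD0 i).le)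
    simpa [g] using this
  have hS0 : (0:ℝ) < S := lt_of_lt_of_le one_pos hS1
  set w : ℕ → ℝ := fun k => g N D q k / S with hwdef
  have hw : ∀ k, 0 ≤ w k := fun k => div_nonneg (g_pos hq0 hq1 hN₂ hD0 k).le hS0.le
  have hwsum : Summable w := hgsum.div_const S
  have htw : ∑' k, w k = 1 := by
    rw [hwdef]
    rw [tsum_div_const]
    exact div_self hS0.ne'
  have hqk01 : ∀ k : ℕ, q ^ k ∈ Set.Icc (0:ℝ) 1 :=
    fun k => ⟨(pow_pos hq0 k).le, pow_le_one₀ hq0.le hq1.le⟩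
  refine ⟨Measure.sum (fun k => ENNReal.ofReal (w k) • Measure.dirac (q ^ k)), ?_, ?_, ?_⟩
  · constructor
    rw [Measure.sum_apply _ MeasurableSet.univ]
    simp only [Measure.smul_apply, measure_univ, smul_eq_mul, mul_one]
    rw [← ENNReal.ofReal_tsum_of_nonneg hw hwsum, htw, ENNReal.ofReal_one]
  · rw [Measure.sum_apply _ measurableSet_Icc.compl]
    refine ENNReal.tsum_eq_zero.2 (fun k => ?_)
    simp only [Measure.smul_apply, smul_eq_mul]
    rw [Measure.dirac_apply' _ measurableSet_Icc.compl]
    rw [Set.indicator_of_notMem (by simp [hqk01 k]), mul_zero]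
  · intro n
    have hfm : Measurable (fun t : ℝ => t ^ n) := measurable_id.pow_const n
    have hbound : ∀ k : ℕ, (‖(q ^ k) ^ n‖₊ : ENNReal) ≤ 1 := by
      intro k
      rw [← ENNReal.coe_one, ENNReal.coe_le_coe, ← NNReal.coe_le_coe]
      push_cast
      rw [Real.norm_eq_abs, abs_of_nonneg (pow_nonneg (pow_pos hq0 k).le n)]
      exact pow_le_one₀ (pow_pos hq0 k).le (pow_le_one₀ hq0.le hq1.le)
    have hint : Integrable (fun t : ℝ => t ^ n)
        (Measure.sum (fun k => ENNReal.ofReal (w k) • Measure.dirac (q ^ k))) := by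
      refine ⟨hfm.aestronglyMeasurable, ?_⟩
      unfold HasFiniteIntegral
      rw [lintegral_sum_measure]
      simp only [lintegral_smul_measure]
      have hld : ∀ k : ℕ, (∫⁻ t, (‖t ^ n‖₊ : ENNReal) ∂Measure.dirac (q ^ k))
          = (‖(q ^ k) ^ n‖₊ : ENNReal) :=
        fun k => lintegral_dirac' _ (hfm.nnnorm.coe_nnreal_ennreal)
      calc ∑' k, ENNReal.ofReal (w k) * ∫⁻ t, (‖t ^ n‖₊ : ENNReal) ∂Measure.dirac (q ^ k)
          ≤ ∑' k, ENNReal.ofReal (w k) * 1 := by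
            refine ENNReal.tsum_le_tsum (fun k => ?_)
            rw [hld k]
            exact mul_le_mul_right (hbound k) _
        _ = ENNReal.ofReal 1 := by
            simp only [mul_one]
            rw [← ENNReal.ofReal_tsum_of_nonneg hw hwsum, htw]
        _ < ⊤ := ENNReal.ofReal_lt_top
    rw [integral_sum_measure hint]
    have hterm : ∀ k : ℕ, (∫ t, t ^ n ∂(ENNReal.ofReal (w k) • Measure.dirac (q ^ k)))
        = g N D q k * (q ^ n) ^ k / S := by
      intro k
      rw [integral_smul_measure, integral_dirac, ENNReal.toReal_ofReal (hw k), smul_eq_mul]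
      rw [hwdef, ← pow_mul, mul_comm k n, pow_mul]
      ring
    rw [tsum_congr hterm, tsum_div_const, T_eq hq0 hq1 hN₁ hN₂ hD0 n, ← hSdef]
    rw [mul_comm, mul_div_assoc, div_self hS0.ne', mul_one]
    refine Finset.prod_congr rfl (fun i _ => ?_)
    have hpi : (0:ℝ) < p ^ i := pow_pos hp0 i
    rw [hqdef, inv_pow]
    rw [div_eq_div_iff (by positivity) (by positivity)]
    field_simp
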